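/- Let n ≥ 1, u : Fin n → ℝ, and T ≥ 1. Then (Σⱼ exp(uⱼ))^(1/T) ≤ Σⱼ exp(uⱼ/T), and consequently, for every index i, log(softmaxᵢ(u/T)) ≤ (1/T)·log(softmaxᵢ(u)). -/

import Mathlib

open Real Finset

lemma aux_rpow_sum_le {ι : Type*} (s : Finset ι) (f : ι → ℝ) (hf : ∀ i, 0 ≤ f i)
    {p : ℝ} (hp0 : 0 < p) (hp1 : p ≤ 1) :
    (∑ j ∈ s, f j) ^ p ≤ ∑ j ∈ s, (f j) ^ p := by
  classical
  induction s using Finset.induction with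
  | empty =>
    simp [Real.zero_rpow hp0.ne']
  | insert a t hx ih =>
    rw [Finset.sum_insert hx, Finset.sum_insert hx]
    calc (f a + ∑ j ∈ t, f j) ^ p ≤ (f a) ^ p + (∑ j ∈ t, f j) ^ p := by
          have h2 := NNReal.rpow_add_le_add_rpow ⟨f a, hf a⟩
            ⟨∑ j ∈ t, f j, Finset.sum_nonneg fun j _ => hf j⟩ hp0.le hp1
          exact_mod_cast h2
      _ ≤ (f a) ^ p + ∑ j ∈ t, (f j) ^ p := by linarith [ih]

theorem rpow_sum_le_sum_and_log_softmax_le (n : ℕ) (hn : 1 ≤ n) (u : Fin n → ℝ)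
    (T : ℝ) (hT : 1 ≤ T) :
    (∑ j, Real.exp (u j)) ^ (1 / T) ≤ ∑ j, Real.exp (u j / T) ∧
      ∀ i : Fin n,
        Real.log (Real.exp (u i / T) / ∑ j, Real.exp (u j / T)) ≤
          (1 / T) * Real.log (Real.exp (u i) / ∑ j, Real.exp (u j)) := by
  have hT0 : 0 < T := lt_of_lt_of_le one_pos hT
  have hp0 : (0:ℝ) < 1 / T := by positivity
  have hp1 : 1 / T ≤ 1 := by
    rw [div_le_one hT0]; exact hT
  have hkey : (∑ j, Real.exp (u j)) ^ (1 / T) ≤ ∑ j, Real.exp (u j / T) := by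
    have := aux_rpow_sum_le Finset.univ (fun j => Real.exp (u j))
      (fun j => (Real.exp_pos _).le) (by positivity) hp1
    refine this.trans_eq (Finset.sum_congr rfl fun j _ => ?_)
    rw [← Real.exp_mul]
    ring_nf
  refine ⟨hkey, fun i => ?_⟩
  have hS : 0 < ∑ j, Real.exp (u j) :=
    Finset.sum_pos (fun j _ => Real.exp_pos _) (Finset.univ_nonempty_iff.mpr
      (Fin.pos_iff_nonempty.mp hn))
  have hST : 0 < ∑ j, Real.exp (u j / T) :=
    Finset.sum_pos (fun j _ => Real.exp_pos _) (Finset.univ_nonempty_iff.mpr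
      (Fin.pos_iff_nonempty.mp hn))
  have hlog : (1 / T) * Real.log (∑ j, Real.exp (u j)) ≤ Real.log (∑ j, Real.exp (u j / T)) := by
    have := Real.log_le_log (Real.rpow_pos_of_pos hS _) hkey
    rwa [Real.log_rpow hS] at this
  rw [Real.log_div (Real.exp_ne_zero _) hST.ne', Real.log_div (Real.exp_ne_zero _) hS.ne',
    Real.log_exp, Real.log_exp, mul_sub]
  have : 1 / T * u i = u i / T := by ring
  linarith [hlog]
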